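/- Let A be a Banach algebra with a bounded approximate identity (e_ν)_{ν∈Λ}, and let S be a closed subalgebra of A₊. Define the bar coboundary δrⁿ on S-relative cochains by (δrⁿf)(a₀,...,a_{n+1}) = Σ_{i=0}^{n} (-1)^i f(a₀,...,a_i a_{i+1},...,a_{n+1}). Then for every n ≥ 1 and every f ∈ C_Sⁿ(A) with δrⁿf = 0, there exists g ∈ C_S^{n-1}(A) such that δr^{n-1}g = f. In other words, the cohomology HRⁿ_S(A) of the complex (C_S•(A), δr) vanishes for all n ≥ 1. -/

import Mathlib

/-!
STATEMENT 6: Let `A` be a Banach algebra with a bounded approximate identity and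
`S` a closed subalgebra of `A₊`.  Then the cohomology of the bar complex of
`S`-relative cochains vanishes in all degrees `n ≥ 1`: every `S`-relative
`n`-cocycle for the bar coboundary `δr` is `δr` of an `S`-relative
`(n-1)`-cochain.  (Here an `n`-cochain is a bounded `(n+1)`-linear functional;
below the degree is written as `n + 1` so that `n + 1 ≥ 1` covers all cases.)
-/

open Finset Filter

/-- The product `s·a ∈ A` of `s ∈ A₊` and `a ∈ A`. -/
noncomputable def opL {A : Type*} [NonUnitalNormedRing A] [NormedSpace ℂ A]
    [IsScalarTower ℂ A A] [SMulCommClass ℂ A A]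
    (s : Unitization ℂ A) (a : A) : A := (s * (a : Unitization ℂ A)).snd

/-- The product `a·s ∈ A` of `a ∈ A` and `s ∈ A₊`. -/
noncomputable def opR {A : Type*} [NonUnitalNormedRing A] [NormedSpace ℂ A]
    [IsScalarTower ℂ A A] [SMulCommClass ℂ A A]
    (a : A) (s : Unitization ℂ A) : A := ((a : Unitization ℂ A) * s).snd

/-- `S`-relativity for an `(n+1)`-linear functional (`n`-cochain) on `A`. -/
def IsRelCochain {A : Type*} [NonUnitalNormedRing A] [NormedSpace ℂ A]
    [IsScalarTower ℂ A A] [SMulCommClass ℂ A A]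
    (S : Subalgebra ℂ (Unitization ℂ A)) {n : ℕ}
    (f : (Fin (n + 1) → A) → ℂ) : Prop :=
  (∀ s ∈ S, ∀ a : Fin (n + 1) → A,
      f (Function.update a 0 (opL s (a 0)))
        = f (Function.update a (Fin.last n) (opR (a (Fin.last n)) s))) ∧
  (∀ s ∈ S, ∀ a : Fin (n + 1) → A, ∀ j : Fin n,
      f (Function.update a j.castSucc (opR (a j.castSucc) s))
        = f (Function.update a j.succ (opL s (a j.succ))))

/-- Merge the arguments `a i` and `a (i+1)` of an `(n+2)`-tuple into a product. -/
def cycMerge {A : Type*} [Mul A] {n : ℕ} (a : Fin (n + 2) → A) (i : Fin (n + 1)) :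
    Fin (n + 1) → A := fun j =>
  if (j : ℕ) < (i : ℕ) then a j.castSucc
  else if (j : ℕ) = (i : ℕ) then a j.castSucc * a j.succ
  else a j.succ

/-- The bar coboundary
`(δrⁿf)(a₀,...,a_{n+1}) = Σ_{i=0}^{n} (-1)^i f(a₀,...,a_i a_{i+1},...,a_{n+1})`. -/
noncomputable def barδ {A : Type*} [Mul A] {n : ℕ}
    (g : (Fin (n + 1) → A) → ℂ) : (Fin (n + 2) → A) → ℂ := fun a =>
  ∑ i : Fin (n + 1), ((-1 : ℂ) ^ (i : ℕ)) * g (cycMerge a i)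


section Aux
variable {A : Type*} [Mul A] {n : ℕ}

theorem cycMerge_cons_zero (b : A) (a : Fin (n + 2) → A) :
    cycMerge (Fin.cons b a) 0 = Function.update a 0 (b * a 0) := by
  funext j
  refine Fin.cases ?_ (fun m => ?_) j
  · simp [cycMerge]
  · simp [cycMerge, Fin.succ_ne_zero, Fin.cons_succ]

theorem cycMerge_cons_succ (b : A) (a : Fin (n + 2) → A) (k : Fin (n + 1)) :
    cycMerge (Fin.cons b a) k.succ = Fin.cons b (cycMerge a k) := by
  funext j
  refine Fin.cases ?_ (fun m => ?_) j
  · show cycMerge (Fin.cons b a) k.succ 0 = b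
    rw [cycMerge]
    rw [if_pos (by simp)]
    simp
  · show cycMerge (Fin.cons b a) k.succ m.succ = cycMerge a k m
    rw [cycMerge, cycMerge]
    simp only [Fin.val_succ, ← Fin.succ_castSucc, Fin.cons_succ]
    split_ifs <;> first | rfl | (exfalso; omega)

end Aux

/-- `HRⁿ_S(A) = 0` for `n ≥ 1` when `A` has a bounded approximate identity. -/
theorem bar_cohomology_vanishes
    {A : Type*} [NonUnitalNormedRing A] [NormedSpace ℂ A]
    [IsScalarTower ℂ A A] [SMulCommClass ℂ A A] [CompleteSpace A]
    -- bounded approximate identity `(e_ν)_{ν ∈ Λ}` for `A`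
    {ι : Type*} (l : Filter ι) [l.NeBot] (e : ι → A) (C : ℝ)
    (hbdd : ∀ i, ‖e i‖ ≤ C)
    (hleft : ∀ a : A, Tendsto (fun i => e i * a) l (nhds a))
    (hright : ∀ a : A, Tendsto (fun i => a * e i) l (nhds a))
    (S : Subalgebra ℂ (Unitization ℂ A)) (hS : IsClosed (S : Set (Unitization ℂ A)))
    (n : ℕ)
    (f : ContinuousMultilinearMap ℂ (fun _ : Fin (n + 2) => A) ℂ)
    (hf : IsRelCochain S (⇑f)) (hcocycle : barδ (⇑f) = 0) :
    ∃ g : ContinuousMultilinearMap ℂ (fun _ : Fin (n + 1) => A) ℂ,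
      IsRelCochain S (⇑g) ∧ barδ (⇑g) = ⇑f := by
  classical
  set U : Ultrafilter ι := Ultrafilter.of l with hU
  have hUl : (U : Filter ι) ≤ l := Ultrafilter.of_le l
  set φ : (Fin (n + 1) → A) → ι → ℂ := fun a i => f (Fin.cons (e i) a) with hφ
  have hbound : ∀ (a : Fin (n + 1) → A) (i : ι),
      ‖φ a i‖ ≤ (‖f‖ * max C 0) * ∏ j, ‖a j‖ := by
    intro a i
    simp only [hφ]
    have h1 : ‖f (Fin.cons (e i) a)‖
        ≤ ‖f‖ * ∏ j, ‖(Fin.cons (e i) a : Fin (n + 2) → A) j‖ := f.le_opNorm _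
    have h2 : ∏ j, ‖(Fin.cons (e i) a : Fin (n + 2) → A) j‖ = ‖e i‖ * ∏ j, ‖a j‖ := by
      rw [Fin.prod_univ_succ]; simp [Fin.cons_succ]
    rw [h2] at h1
    calc ‖f (Fin.cons (e i) a)‖ ≤ ‖f‖ * (‖e i‖ * ∏ j, ‖a j‖) := h1
      _ ≤ ‖f‖ * (max C 0 * ∏ j, ‖a j‖) := by
          gcongr
          exact (hbdd i).trans (le_max_left _ _)
      _ = (‖f‖ * max C 0) * ∏ j, ‖a j‖ := by ring
  have hex : ∀ a, ∃ c, Tendsto (φ a) (U : Filter ι) (nhds c) := by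
    intro a
    obtain ⟨c, -, hc⟩ :=
      (isCompact_closedBall (0 : ℂ) ((‖f‖ * max C 0) * ∏ j, ‖a j‖)).ultrafilter_le_nhds
        (U.map (φ a)) (by
          rw [Ultrafilter.coe_map, Filter.le_principal_iff, Filter.mem_map]
          exact Filter.univ_mem' fun i => by
            simpa [Metric.mem_closedBall, dist_zero_right] using hbound a i)
    exact ⟨c, by rwa [Ultrafilter.coe_map] at hc⟩
  set T : (Fin (n + 1) → A) → ℂ := fun a => limUnder (U : Filter ι) (φ a) with hTdef
  have hT : ∀ a, Tendsto (φ a) (U : Filter ι) (nhds (T a)) := fun a =>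
    tendsto_nhds_limUnder (hex a)
  have hTnorm : ∀ a, ‖T a‖ ≤ (‖f‖ * max C 0) * ∏ j, ‖a j‖ := fun a =>
    le_of_tendsto (hT a).norm (Filter.Eventually.of_forall (hbound a))
  -- additivity and homogeneity of `T`
  have hGadd : ∀ (m : Fin (n + 1) → A) (j : Fin (n + 1)) (x y : A),
      T (Function.update m j (x + y))
        = T (Function.update m j x) + T (Function.update m j y) := by
    intro m j x y
    refine tendsto_nhds_unique (hT _) ?_
    have hp : φ (Function.update m j (x + y))
        = fun i => φ (Function.update m j x) i + φ (Function.update m j y) i := by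
      funext i
      simp only [hφ]
      simp only [Fin.cons_update]
      exact f.map_update_add _ _ _ _
    rw [hp]
    exact (hT (Function.update m j x)).add (hT (Function.update m j y))
  have hGsmul : ∀ (m : Fin (n + 1) → A) (j : Fin (n + 1)) (c : ℂ) (x : A),
      T (Function.update m j (c • x)) = c • T (Function.update m j x) := by
    intro m j c x
    refine tendsto_nhds_unique (hT _) ?_
    have hp : φ (Function.update m j (c • x))
        = fun i => c • φ (Function.update m j x) i := by
      funext i
      simp only [hφ]
      simp only [Fin.cons_update]
      exact f.map_update_smul _ _ _ _
    rw [hp]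
    exact (hT (Function.update m j x)).const_smul c
  have hsub : Subsingleton (DecidableEq (Fin (n + 1))) := by infer_instance
  set G : MultilinearMap ℂ (fun _ : Fin (n + 1) => A) ℂ :=
    { toFun := T
      map_update_add' := by
        intro d m j x y
        have hd : d = instDecidableEqFin (n + 1) := Subsingleton.elim _ _
        subst hd
        exact hGadd m j x y
      map_update_smul' := by
        intro d m j c x
        have hd : d = instDecidableEqFin (n + 1) := Subsingleton.elim _ _
        subst hd
        exact hGsmul m j c x } with hG
  refine ⟨G.mkContinuous ((‖f‖ * max C 0)) hTnorm, ?_, ?_⟩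
  · -- relativity
    have hcoe : ⇑(G.mkContinuous ((‖f‖ * max C 0)) hTnorm) = T := rfl
    rw [hcoe]
    constructor
    · intro s hs a
      -- continuity of x ↦ f (cons x a)
      have hcons : Continuous fun x : A => (Fin.cons x a : Fin (n + 2) → A) := by
        have hh : (fun x : A => (Fin.cons x a : Fin (n + 2) → A))
            = fun x => Function.update (Fin.cons (0 : A) a : Fin (n + 2) → A) 0 x := by
          funext x; rw [Fin.update_cons_zero]
        rw [hh]
        exact continuous_const.update 0 continuous_id
      have hfc : Continuous fun x : A => f (Fin.cons x a) := f.cont.comp hcons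
      have haddL : ∀ x y : A,
          f (Fin.cons (x + y) a) = f (Fin.cons x a) + f (Fin.cons y a) := by
        intro x y
        have h := f.map_update_add (Fin.cons (0 : A) a) 0 x y
        simpa [Fin.update_cons_zero] using h
      have hsmulL : ∀ (c : ℂ) (x : A),
          f (Fin.cons (c • x) a) = c * f (Fin.cons x a) := by
        intro c x
        have h := f.map_update_smul (Fin.cons (0 : A) a) 0 c x
        simpa [Fin.update_cons_zero, smul_eq_mul] using h
      have hdecR : ∀ ν, opR (e ν) s = s.fst • e ν + e ν * s.snd := by
        intro ν
        simp [opR, Unitization.snd_mul, Unitization.fst_inr, Unitization.snd_inr]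
      have hdecL : ∀ ν, opL s (e ν) = s.fst • e ν + s.snd * e ν := by
        intro ν
        simp [opL, Unitization.snd_mul, Unitization.fst_inr, Unitization.snd_inr]
      have hLR : Tendsto (fun ν => f (Fin.cons (opR (e ν) s) a)) (U : Filter ι)
          (nhds (s.fst * T a + f (Fin.cons s.snd a))) := by
        have h1 : (fun ν => f (Fin.cons (opR (e ν) s) a))
            = fun ν => s.fst * f (Fin.cons (e ν) a) + f (Fin.cons (e ν * s.snd) a) := by
          funext ν; rw [hdecR, haddL, hsmulL]
        rw [h1]
        exact ((hT a).const_mul _).add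
          ((hfc.tendsto s.snd).comp ((hleft s.snd).mono_left hUl))
      have hLL : Tendsto (fun ν => f (Fin.cons (opL s (e ν)) a)) (U : Filter ι)
          (nhds (s.fst * T a + f (Fin.cons s.snd a))) := by
        have h1 : (fun ν => f (Fin.cons (opL s (e ν)) a))
            = fun ν => s.fst * f (Fin.cons (e ν) a) + f (Fin.cons (s.snd * e ν) a) := by
          funext ν; rw [hdecL, haddL, hsmulL]
        rw [h1]
        exact ((hT a).const_mul _).add
          ((hfc.tendsto s.snd).comp ((hright s.snd).mono_left hUl))
      have hpL : φ (Function.update a 0 (opL s (a 0)))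
          = fun ν => f (Fin.cons (opR (e ν) s) a) := by
        funext ν
        simp only [hφ]
        have h2 := hf.2 s hs (Fin.cons (e ν) a) 0
        simp only [Fin.castSucc_zero, Fin.cons_zero, Fin.cons_succ,
          Fin.update_cons_zero] at h2
        simp only [Fin.cons_update]
        exact h2.symm
      have hpR : φ (Function.update a (Fin.last n) (opR (a (Fin.last n)) s))
          = fun ν => f (Fin.cons (opL s (e ν)) a) := by
        funext ν
        simp only [hφ]
        have h1 := hf.1 s hs (Fin.cons (e ν) a)
        simp only [Fin.cons_zero, Fin.update_cons_zero, ← Fin.succ_last,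
          Fin.cons_succ] at h1
        simp only [Fin.cons_update]
        exact h1.symm
      have t1 : Tendsto (fun ν => f (Fin.cons (opR (e ν) s) a)) (U : Filter ι)
          (nhds (T (Function.update a 0 (opL s (a 0))))) := by
        rw [← hpL]; exact hT _
      have t2 : Tendsto (fun ν => f (Fin.cons (opL s (e ν)) a)) (U : Filter ι)
          (nhds (T (Function.update a (Fin.last n) (opR (a (Fin.last n)) s)))) := by
        rw [← hpR]; exact hT _
      exact (tendsto_nhds_unique t1 hLR).trans (tendsto_nhds_unique t2 hLL).symm
    · intro s hs a j
      refine tendsto_nhds_unique (hT _) ?_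
      have hp : φ (Function.update a j.castSucc (opR (a j.castSucc) s))
          = φ (Function.update a j.succ (opL s (a j.succ))) := by
        funext ν
        simp only [hφ]
        have h := hf.2 s hs (Fin.cons (e ν) a) j.succ
        simp only [← Fin.succ_castSucc, Fin.cons_succ] at h
        simp only [Fin.cons_update]
        exact h
      rw [hp]
      exact hT _
  · -- coboundary
    have hcoe : ⇑(G.mkContinuous ((‖f‖ * max C 0)) hTnorm) = T := rfl
    rw [hcoe]
    funext a
    -- the key cocycle identity
    have key : ∀ (b : A),
        ∑ k : Fin (n + 1), (-1 : ℂ) ^ (k : ℕ) * f (Fin.cons b (cycMerge a k))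
          = f (Function.update a 0 (b * a 0)) := by
      intro b
      have h0 := congrFun hcocycle (Fin.cons b a)
      simp only [barδ, Pi.zero_apply] at h0
      rw [Fin.sum_univ_succ] at h0
      simp only [cycMerge_cons_zero, cycMerge_cons_succ, Fin.val_zero, pow_zero,
        one_mul, Fin.val_succ] at h0
      have hs2 : ∑ k : Fin (n + 1),
          (-1 : ℂ) ^ ((k : ℕ) + 1) * f (Fin.cons b (cycMerge a k))
          = -∑ k : Fin (n + 1), (-1 : ℂ) ^ (k : ℕ) * f (Fin.cons b (cycMerge a k)) := by
        rw [← Finset.sum_neg_distrib]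
        exact Finset.sum_congr rfl fun k _ => by ring
      rw [hs2] at h0
      linear_combination -h0

    have h1 : Tendsto (fun ν => f (Function.update a 0 (e ν * a 0))) (U : Filter ι)
        (nhds (barδ T a)) := by
      have h2 : Tendsto (fun ν => ∑ k : Fin (n + 1),
            (-1 : ℂ) ^ (k : ℕ) * φ (cycMerge a k) ν) (U : Filter ι)
          (nhds (∑ k : Fin (n + 1), (-1 : ℂ) ^ (k : ℕ) * T (cycMerge a k))) :=
        tendsto_finset_sum _ fun k _ => (hT (cycMerge a k)).const_mul _
      have h3 : (fun ν => ∑ k : Fin (n + 1),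
            (-1 : ℂ) ^ (k : ℕ) * φ (cycMerge a k) ν)
          = fun ν => f (Function.update a 0 (e ν * a 0)) := by
        funext ν; exact key (e ν)
      rw [← h3]
      show Tendsto _ _ (nhds (∑ k : Fin (n + 1), (-1 : ℂ) ^ (k : ℕ) * T (cycMerge a k)))
      exact h2
    have h4 : Tendsto (fun ν => f (Function.update a 0 (e ν * a 0))) (U : Filter ι)
        (nhds (f a)) := by
      have hc : Continuous fun x : A => f (Function.update a 0 x) :=
        f.cont.comp (continuous_const.update 0 continuous_id)
      have h5 := (hc.tendsto (a 0)).comp ((hleft (a 0)).mono_left hUl)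
      simpa [Function.update_eq_self, Function.comp_def] using h5
    exact tendsto_nhds_unique h1 h4
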